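/- Let f ∈ k[x₁,…,xₙ] be reduced. Suppose Der(f) ⊆ Der_k(k[x₁,…,xₙ]) is a free module with a basis δ₁,…,δₙ of homogeneous derivations (each δᵢ = Σⱼ Pⱼⁱ∂/∂xⱼ with all Pⱼⁱ homogeneous of degree deg δᵢ) such that Σᵢ deg(δᵢ) = deg(f). Then the divisor in ℙⁿ defined by x₀·f^h (homogenization in x₀) is free: Der(x₀f^h) ⊆ Der_k(k[x₀,…,xₙ]) is a free module of rank n+1 with basis the Euler derivation together with δ₁^h,…,δₙ^h, and the determinant of the corresponding (n+1)×(n+1) Saito matrix equals x₀·f^h up to a unit. -/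

import Mathlib

open MvPolynomial

/-- Homogenization of `f ∈ k[x₁,…,xₙ]` to degree `d` in the new variable `x₀`
(variable `0` of `Fin (n+1)`; the old variables embed via `Fin.succ`). -/
noncomputable def homog {k : Type*} [CommRing k] {n : ℕ} (d : ℕ)
    (f : MvPolynomial (Fin n) k) : MvPolynomial (Fin (n + 1)) k :=
  (AddMonoidAlgebra.coeff f).sum fun m c =>
    MvPolynomial.monomial
      (Finsupp.mapDomain Fin.succ m + Finsupp.single 0 (d - m.sum fun _ e => e)) c

/-- The rows of the Saito matrix for the cone construction: the first row is the Euler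
derivation `Σ xⱼ∂ⱼ` of `k[x₀,…,xₙ]`, and row `i + 1` is the homogenization `δᵢ^h` of the
derivation `δᵢ = Σⱼ P i j ∂ⱼ` (zero coefficient on `∂₀`, each `P i j` homogenized to
degree `d i`). -/
noncomputable def saitoRows {k : Type*} [CommRing k] {n : ℕ} (d : Fin n → ℕ)
    (P : Fin n → Fin n → MvPolynomial (Fin n) k) :
    Fin (n + 1) → Fin (n + 1) → MvPolynomial (Fin (n + 1)) k :=
  Fin.cons (fun j => MvPolynomial.X j)
    (fun i => Fin.cons 0 fun j => homog (d i) (P i j))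

namespace Stmt17Aux

/-- Coefficient of a partial derivative. -/
lemma coeff_pderiv {k : Type*} [CommSemiring k] {σ : Type*} (j : σ) (u : σ →₀ ℕ)
    (p : MvPolynomial σ k) :
    coeff u (pderiv j p) = coeff (u + Finsupp.single j 1) p * ((u j + 1 : ℕ) : k) := by
  classical
  induction p using MvPolynomial.induction_on' with
  | monomial s a =>
    rw [pderiv_monomial, coeff_monomial, coeff_monomial]
    by_cases h : s = u + Finsupp.single j 1
    · subst h
      have h1 : u + Finsupp.single j 1 - Finsupp.single j 1 = u := by
        ext a; simp
      rw [if_pos h1, if_pos rfl]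
      simp
    · rw [if_neg h, zero_mul]
      by_cases h2 : s - Finsupp.single j 1 = u
      · by_cases h3 : s j = 0
        · rw [if_pos h2]; simp [h3]
        · exfalso; apply h
          rw [← h2, tsub_add_cancel_of_le]
          exact Finsupp.single_le_iff.mpr (Nat.one_le_iff_ne_zero.mpr h3)
      · rw [if_neg h2]
  | add p q hp hq => simp [coeff_add, hp, hq, add_mul]

lemma degree_add_single {σ : Type*} (m : σ →₀ ℕ) (j : σ) :
    ((m + Finsupp.single j 1).sum fun _ e => e) = (m.sum fun _ e => e) + 1 := by
  classical
  rw [Finsupp.sum_add_index' (fun _ => rfl) (fun _ _ _ => rfl),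
    Finsupp.sum_single_index rfl]

lemma totalDegree_pderiv_lt {k : Type*} [CommSemiring k] {σ : Type*} (j : σ)
    {p : MvPolynomial σ k} (h : pderiv j p ≠ 0) :
    (pderiv j p).totalDegree < p.totalDegree := by
  classical
  obtain ⟨m, hm, hms⟩ := Finset.exists_mem_eq_sup (pderiv j p).support
    (support_nonempty.mpr h) (fun s => s.sum fun _ e => e)
  have hc : coeff m (pderiv j p) ≠ 0 := mem_support_iff.mp hm
  have hcp : coeff (m + Finsupp.single j 1) p ≠ 0 := by
    intro h0
    exact hc (by rw [coeff_pderiv, h0, zero_mul])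
  have hle := le_totalDegree (mem_support_iff.mpr hcp)
  rw [degree_add_single] at hle
  have : (pderiv j p).totalDegree = m.sum fun _ e => e := hms
  omega

lemma eq_C_of_pderiv_eq_zero {k : Type*} [Field k] [CharZero k] {σ : Type*}
    {p : MvPolynomial σ k} (h : ∀ j, pderiv j p = 0) : p = C (coeff 0 p) := by
  classical
  apply MvPolynomial.ext
  intro m
  rcases eq_or_ne m 0 with rfl | hm
  · simp [coeff_C]
  · rw [coeff_C, if_neg (Ne.symm hm)]
    obtain ⟨j, hj⟩ : ∃ j, m j ≠ 0 := by
      by_contra hc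
      push_neg at hc
      exact hm (Finsupp.ext fun a => hc a)
    have key := coeff_pderiv j (m - Finsupp.single j 1) p
    rw [h j] at key
    have h1 : m - Finsupp.single j 1 + Finsupp.single j 1 = m :=
      tsub_add_cancel_of_le (Finsupp.single_le_iff.mpr (Nat.one_le_iff_ne_zero.mpr hj))
    have h2 : ((m - Finsupp.single j 1 : _ →₀ ℕ) j) + 1 = m j := by
      rw [Finsupp.tsub_apply, Finsupp.single_eq_same]
      omega
    rw [h1, h2] at key
    have := key.symm
    rcases mul_eq_zero.mp this with h3 | h3
    · exact h3
    · exact absurd (Nat.cast_eq_zero.mp h3) hj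

lemma isHomogeneous_degree {k : Type*} [CommSemiring k] {σ : Type*}
    {f : MvPolynomial σ k} {D : ℕ} (hf : f.IsHomogeneous D) {m : σ →₀ ℕ}
    (hm : coeff m f ≠ 0) : (m.sum fun _ e => e) = D := by
  have h := hf hm
  rw [← h, Finsupp.weight_apply]
  simp [Finsupp.sum]

lemma coeff_eq_zero_of_totalDegree_lt' {k : Type*} [CommSemiring k] {σ : Type*}
    {p : MvPolynomial σ k} {m : σ →₀ ℕ} (h : p.totalDegree < m.sum fun _ e => e) :
    coeff m p = 0 := by
  by_contra hc
  exact absurd (le_totalDegree (mem_support_iff.mpr hc)) (by omega)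

lemma totalDegree_mul_eq {k : Type*} [CommRing k] [IsDomain k] {σ : Type*}
    {p q : MvPolynomial σ k} (hp : p ≠ 0) (hq : q ≠ 0) :
    (p * q).totalDegree = p.totalDegree + q.totalDegree := by
  classical
  refine le_antisymm (totalDegree_mul p q) ?_
  set a := p.totalDegree with ha
  set b := q.totalDegree with hb
  have hdeg_sum : ∀ m : σ →₀ ℕ, Finsupp.degree m = m.sum fun _ e => e := fun m => rfl
  set tp := homogeneousComponent a p with htp
  set tq := homogeneousComponent b q with htq
  have htpne : tp ≠ 0 := by
    obtain ⟨m, hm, hms⟩ := Finset.exists_mem_eq_sup p.support (support_nonempty.mpr hp)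
      (fun s => s.sum fun _ e => e)
    intro h0
    have hcm : coeff m tp = coeff m p := by
      rw [htp, coeff_homogeneousComponent, if_pos (by rw [hdeg_sum]; exact hms.symm)]
    rw [h0, coeff_zero] at hcm
    exact mem_support_iff.mp hm hcm.symm
  have htqne : tq ≠ 0 := by
    obtain ⟨m, hm, hms⟩ := Finset.exists_mem_eq_sup q.support (support_nonempty.mpr hq)
      (fun s => s.sum fun _ e => e)
    intro h0
    have hcm : coeff m tq = coeff m q := by
      rw [htq, coeff_homogeneousComponent, if_pos (by rw [hdeg_sum]; exact hms.symm)]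
    rw [h0, coeff_zero] at hcm
    exact mem_support_iff.mp hm hcm.symm
  have hprodne : tp * tq ≠ 0 := mul_ne_zero htpne htqne
  obtain ⟨m, hm⟩ := exists_coeff_ne_zero hprodne
  have hmdeg : (m.sum fun _ e => e) = a + b := by
    have := (homogeneousComponent_isHomogeneous a p).mul
      (homogeneousComponent_isHomogeneous b q)
    exact isHomogeneous_degree this hm
  have hcoeq : coeff m (p * q) = coeff m (tp * tq) := by
    rw [coeff_mul, coeff_mul]
    refine Finset.sum_congr rfl fun x hx => ?_
    have hxm : x.1 + x.2 = m := Finset.HasAntidiagonal.mem_antidiagonal.mp hx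
    have hxsum : (x.1.sum fun _ e => e) + (x.2.sum fun _ e => e) = a + b := by
      rw [← hmdeg, ← hxm]
      rw [Finsupp.sum_add_index' (fun _ => rfl) (fun _ _ _ => rfl)]
    rw [htp, htq, coeff_homogeneousComponent, coeff_homogeneousComponent]
    rcases lt_trichotomy (x.1.sum fun _ e => e) a with h1 | h1 | h1
    · have h2 : b < x.2.sum fun _ e => e := by omega
      have e2 : coeff x.2 q = 0 := coeff_eq_zero_of_totalDegree_lt' (by omega)
      rw [e2, if_neg (by rw [hdeg_sum]; omega)]
      simp
    · have h2 : (x.2.sum fun _ e => e) = b := by omega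
      rw [if_pos (by rw [hdeg_sum]; exact h1), if_pos (by rw [hdeg_sum]; exact h2)]
    · have e1 : coeff x.1 p = 0 := coeff_eq_zero_of_totalDegree_lt' (by omega)
      rw [e1, if_neg (by rw [hdeg_sum]; omega)]
      simp
  have : coeff m (p * q) ≠ 0 := by rw [hcoeq]; exact hm
  have := le_totalDegree (mem_support_iff.mpr this)
  omega

lemma totalDegree_le_of_dvd {k : Type*} [CommRing k] [IsDomain k] {σ : Type*}
    {p g : MvPolynomial σ k} (hg : g ≠ 0) (h : p ∣ g) :
    p.totalDegree ≤ g.totalDegree := by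
  obtain ⟨c, rfl⟩ := h
  have hp : p ≠ 0 := fun h0 => hg (by rw [h0, zero_mul])
  have hc : c ≠ 0 := fun h0 => hg (by rw [h0, mul_zero])
  rw [totalDegree_mul_eq hp hc]
  omega

lemma eq_C_of_totalDegree_eq_zero {k : Type*} [CommSemiring k] {σ : Type*}
    {p : MvPolynomial σ k} (h : p.totalDegree = 0) : p = C (coeff 0 p) := by
  classical
  apply MvPolynomial.ext
  intro m
  rcases eq_or_ne m 0 with rfl | hm
  · simp [coeff_C]
  · rw [coeff_C, if_neg (Ne.symm hm)]
    obtain ⟨j, hj⟩ : ∃ j, m j ≠ 0 := by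
      by_contra hc
      push_neg at hc
      exact hm (Finsupp.ext fun a => hc a)
    apply coeff_eq_zero_of_totalDegree_lt'
    rw [h]
    have hjs : j ∈ m.support := Finsupp.mem_support_iff.mpr hj
    have : m j ≤ m.sum fun _ e => e :=
      Finset.single_le_sum (f := fun i => m i) (fun _ _ => Nat.zero_le _) hjs
    omega

/-- In a UFD, a squarefree element divides anything divisible by all of its prime
divisors. -/
lemma squarefree_dvd_of_prime_dvd {α : Type*} [CommMonoidWithZero α] [Nontrivial α]
    [UniqueFactorizationMonoid α] {f g : α} (hf : Squarefree f)
    (h : ∀ p, Prime p → p ∣ f → p ∣ g) : f ∣ g := by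
  revert hf h
  induction f using UniqueFactorizationMonoid.induction_on_prime with
  | h₁ =>
    intro hf _
    exact absurd hf not_squarefree_zero
  | h₂ x hx =>
    intro _ _
    exact hx.dvd
  | h₃ a p ha hp ih =>
    intro hf h
    have hpg : p ∣ g := h p hp (dvd_mul_right p a)
    have hag : a ∣ g := ih hf.of_mul_right fun q hq hqa => h q hq (hqa.mul_left p)
    have hpa : ¬ p ∣ a := by
      intro hpa
      exact hp.not_unit (hf p (mul_dvd_mul_left p hpa))
    obtain ⟨t, rfl⟩ := hag
    have hpt : p ∣ t := (hp.dvd_mul.mp hpg).resolve_left hpa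
    obtain ⟨s, rfl⟩ := hpt
    exact ⟨s, by rw [← mul_assoc, mul_comm a p]⟩

lemma squarefree_dvd_of_dvd_mul_pderiv {k : Type*} [Field k] [CharZero k] {n : ℕ}
    {f g : MvPolynomial (Fin n) k} (hf : Squarefree f)
    (h : ∀ j, f ∣ g * pderiv j f) : f ∣ g := by
  apply squarefree_dvd_of_prime_dvd hf
  intro p hp hpf
  by_contra hpg
  have hpd : ∀ j, pderiv j p = 0 := by
    intro j
    have h1 : p ∣ g * pderiv j f := hpf.trans (h j)
    have h2 : p ∣ pderiv j f := (hp.dvd_mul.mp h1).resolve_left hpg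
    obtain ⟨t, rfl⟩ := hpf
    have hpt : ¬ p ∣ t := by
      intro hpt
      exact hp.not_unit (hf p (mul_dvd_mul_left p hpt))
    rw [pderiv_mul] at h2
    have h3 : p ∣ pderiv j p * t := (dvd_add_right (Dvd.intro _ rfl)).mp (by
      rwa [add_comm] at h2)
    have h4 : p ∣ pderiv j p := (hp.dvd_mul.mp h3).resolve_right hpt
    by_contra hne
    have := totalDegree_le_of_dvd hne h4
    exact absurd this (not_le.mpr (totalDegree_pderiv_lt j hne))
  have hpc := eq_C_of_pderiv_eq_zero hpd
  have hc0 : coeff 0 p ≠ 0 := by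
    intro h0
    rw [h0, map_zero] at hpc
    exact hp.ne_zero hpc
  exact hp.not_unit (hpc ▸ (isUnit_iff_ne_zero.mpr hc0).map C)

lemma det_isHomogeneous {k : Type*} [CommRing k] {n : ℕ} (d : Fin n → ℕ)
    (P : Fin n → Fin n → MvPolynomial (Fin n) k)
    (hhom : ∀ i j, (P i j).IsHomogeneous (d i)) :
    ((Matrix.of P).det).IsHomogeneous (∑ i, d i) := by
  rw [Matrix.det_apply]
  apply IsHomogeneous.sum
  intro σ _
  have hprod : (∏ i, P (σ i) i).IsHomogeneous (∑ i, d (σ i)) :=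
    IsHomogeneous.prod _ _ _ (fun i _ => hhom (σ i) i)
  have hs : ∑ i, d (σ i) = ∑ i, d i := Equiv.sum_comp σ d
  rw [hs] at hprod
  have : (Matrix.of P).det = (Matrix.of P).det := rfl
  rcases Int.units_eq_one_or (Equiv.Perm.sign σ) with h | h <;> rw [h]
  · simpa using hprod
  · have : ((-1 : ℤˣ) • ∏ i, Matrix.of P (σ i) i) = -(∏ i, P (σ i) i) := by
      simp [Units.smul_def]
    rw [this]
    exact hprod.neg

lemma euler_identity {k : Type*} [CommSemiring k] {σ : Type*} [Fintype σ] [DecidableEq σ]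
    {f : MvPolynomial σ k} {D : ℕ} (hf : f.IsHomogeneous D) :
    ∑ j, X j * pderiv j f = (D : MvPolynomial σ k) * f := by
  classical
  have key : ∀ m ∈ f.support,
      ∑ j, X j * pderiv j (monomial m (coeff m f)) = (D : MvPolynomial σ k) *
        monomial m (coeff m f) := by
    intro m hm
    have step : ∀ j, X j * pderiv j (monomial m (coeff m f)) =
        monomial m (coeff m f * (m j : k)) := by
      intro j
      rw [pderiv_monomial]
      by_cases hj : m j = 0
      · simp [hj]
      · have h1 : Finsupp.single j 1 + (m - Finsupp.single j 1) = m := by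
          rw [add_comm]
          exact tsub_add_cancel_of_le (Finsupp.single_le_iff.mpr
            (Nat.one_le_iff_ne_zero.mpr hj))
        calc X j * monomial (m - Finsupp.single j 1) (coeff m f * (m j : k))
            = X j ^ 1 * monomial (m - Finsupp.single j 1) (coeff m f * (m j : k)) := by
              rw [pow_one]
          _ = monomial (Finsupp.single j 1 + (m - Finsupp.single j 1))
                (coeff m f * (m j : k)) := (monomial_single_add).symm
          _ = monomial m (coeff m f * (m j : k)) := by rw [h1]
    simp only [step]
    rw [← map_sum (monomial m)]
    have hsum : ∑ j, coeff m f * (m j : k) = coeff m f * (D : k) := by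
      rw [← Finset.mul_sum]
      congr 1
      rw [← Nat.cast_sum]
      congr 1
      have hmD : (m.sum fun _ e => e) = D :=
        isHomogeneous_degree hf (mem_support_iff.mp hm)
      rw [← hmD, Finsupp.sum_fintype]
      intro _; rfl
    rw [hsum]
    have : (D : MvPolynomial σ k) = C (D : k) := by
      rw [map_natCast (C : k →+* MvPolynomial σ k)]
    rw [this, C_mul_monomial, mul_comm]
  calc ∑ j, X j * pderiv j f
      = ∑ j, ∑ m ∈ f.support, X j * pderiv j (monomial m (coeff m f)) := by
        refine Finset.sum_congr rfl fun j _ => ?_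
        conv_lhs => rw [← support_sum_monomial_coeff f]
        rw [map_sum (pderiv j), Finset.mul_sum]
    _ = ∑ m ∈ f.support, ∑ j, X j * pderiv j (monomial m (coeff m f)) :=
        Finset.sum_comm
    _ = ∑ m ∈ f.support, (D : MvPolynomial σ k) * monomial m (coeff m f) :=
        Finset.sum_congr rfl key
    _ = (D : MvPolynomial σ k) * f := by
        rw [← Finset.mul_sum, support_sum_monomial_coeff]

lemma homog_eq_rename {k : Type*} [CommRing k] {n : ℕ} {f : MvPolynomial (Fin n) k}
    {D : ℕ} (hf : f.IsHomogeneous D) : homog D f = rename Fin.succ f := by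
  rw [homog]
  conv_rhs => rw [← support_sum_monomial_coeff f]
  rw [map_sum]
  rw [Finsupp.sum]
  refine Finset.sum_congr rfl fun m hm => ?_
  rw [rename_monomial]
  have hmD : (m.sum fun _ e => e) = D := isHomogeneous_degree hf (mem_support_iff.mp hm)
  rw [hmD, Nat.sub_self, Finsupp.single_zero, add_zero]
  rfl

lemma pderiv_zero_rename_succ {k : Type*} [CommRing k] {n : ℕ}
    (p : MvPolynomial (Fin n) k) :
    pderiv (0 : Fin (n + 1)) (rename Fin.succ p) = 0 := by
  induction p using MvPolynomial.induction_on with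
  | C a => rw [rename_C, pderiv_C]
  | add p q hp hq => rw [map_add, map_add, hp, hq, add_zero]
  | mul_X p i hp =>
    rw [map_mul, pderiv_mul, hp, rename_X, pderiv_X_of_ne (Fin.succ_ne_zero i), mul_zero,
      zero_mul, add_zero]

lemma finSuccEquiv_rename_succ {k : Type*} [CommRing k] {n : ℕ}
    (p : MvPolynomial (Fin n) k) :
    finSuccEquiv k n (rename Fin.succ p) = Polynomial.C p := by
  have h : ((finSuccEquiv k n).toAlgHom.comp (rename Fin.succ) :
      MvPolynomial (Fin n) k →ₐ[k] Polynomial (MvPolynomial (Fin n) k)) =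
      (Polynomial.CAlgHom : MvPolynomial (Fin n) k →ₐ[k] _) := by
    apply MvPolynomial.algHom_ext
    intro i
    simp [finSuccEquiv_X_succ, Polynomial.CAlgHom]
  have := AlgHom.congr_fun h p
  simpa [Polynomial.CAlgHom] using this

end Stmt17Aux

/-- Let `f ∈ k[x₁,…,xₙ]` be reduced (squarefree) with `Der(f)` free with
a basis of homogeneous derivations `δᵢ = Σⱼ P i j ∂ⱼ` (each `P i j` homogeneous of degree
`d i`) satisfying `Σ d i = deg f`. Then the divisor in `ℙⁿ` defined by `x₀·f^h` is free:
the Euler derivation together with `δ₁^h,…,δₙ^h` lie in `Der(x₀ f^h)` and form a basis of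
it, and the determinant of the corresponding `(n+1)×(n+1)` Saito matrix equals `x₀·f^h`
up to a unit. -/
theorem stmt_17 {k : Type*} [Field k] [CharZero k] {n : ℕ}
    (f : MvPolynomial (Fin n) k) (hred : Squarefree f)
    (d : Fin n → ℕ) (P : Fin n → Fin n → MvPolynomial (Fin n) k)
    (hhom : ∀ i j, (P i j).IsHomogeneous (d i))
    (hmem : ∀ i, (∑ j, P i j * pderiv j f) ∈ Ideal.span {f})
    (hbasis : ∀ g : Fin n → MvPolynomial (Fin n) k,
      (∑ j, g j * pderiv j f) ∈ Ideal.span {f} →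
        ∃! c : Fin n → MvPolynomial (Fin n) k, ∀ j, g j = ∑ i, c i * P i j)
    (hdeg : ∑ i, d i = f.totalDegree) :
    (∀ i, (∑ j, saitoRows d P i j * pderiv j (X 0 * homog f.totalDegree f))
        ∈ Ideal.span {X 0 * homog f.totalDegree f}) ∧
    (∀ g : Fin (n + 1) → MvPolynomial (Fin (n + 1)) k,
      (∑ j, g j * pderiv j (X 0 * homog f.totalDegree f))
          ∈ Ideal.span {X 0 * homog f.totalDegree f} →
        ∃! c : Fin (n + 1) → MvPolynomial (Fin (n + 1)) k,
          ∀ j, g j = ∑ i, c i * saitoRows d P i j) ∧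
    (∃ u : k, u ≠ 0 ∧
      (Matrix.of (saitoRows d P)).det = C u * (X 0 * homog f.totalDegree f)) := by
  classical
  have hf0 : f ≠ 0 := hred.ne_zero
  have hdethom : ((Matrix.of P).det).IsHomogeneous f.totalDegree := by
    have := Stmt17Aux.det_isHomogeneous d P hhom
    rwa [hdeg] at this
  have hmemdvd : ∀ i, f ∣ ∑ j, P i j * pderiv j f :=
    fun i => Ideal.mem_span_singleton.mp (hmem i)
  have hdetdvd : f ∣ (Matrix.of P).det := by
    apply Stmt17Aux.squarefree_dvd_of_dvd_mul_pderiv hred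
    intro j
    have key : (Matrix.of P).det • (fun l => pderiv l f) =
        Matrix.mulVec (Matrix.of P).adjugate (Matrix.mulVec (Matrix.of P)
          (fun l => pderiv l f)) := by
      rw [Matrix.mulVec_mulVec, Matrix.adjugate_mul, Matrix.smul_mulVec,
        Matrix.one_mulVec]
    have hkey : (Matrix.of P).det * pderiv j f =
        ∑ i, (Matrix.of P).adjugate j i * ∑ l, P i l * pderiv l f := by
      have h1 := congrFun key j
      simp only [Pi.smul_apply, smul_eq_mul, Matrix.mulVec, dotProduct,
        Matrix.of_apply] at h1
      exact h1
    rw [hkey]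
    exact Finset.dvd_sum fun i _ => (hmemdvd i).mul_left _
  have hdetne : (Matrix.of P).det ≠ 0 := by
    intro h0
    obtain ⟨v, hv0, hvM⟩ := Matrix.exists_vecMul_eq_zero_iff.mpr h0
    obtain ⟨c0, hc0, huniq⟩ := hbasis (fun _ => 0) (by
      simp)
    have h1 : v = c0 := by
      apply huniq
      intro j
      have h2 := congrFun hvM j
      simp only [Matrix.vecMul, dotProduct, Matrix.of_apply, Pi.zero_apply] at h2
      exact h2.symm
    have h2 : (fun _ : Fin n => (0 : MvPolynomial (Fin n) k)) = c0 := by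
      apply huniq
      intro j
      simp
    rw [← h2] at h1
    exact hv0 h1
  obtain ⟨q, hq⟩ := hdetdvd
  have hqne : q ≠ 0 := fun h0 => hdetne (by rw [hq, h0, mul_zero])
  have hq0 : q.totalDegree = 0 := by
    have h1 : (Matrix.of P).det.totalDegree = f.totalDegree := hdethom.totalDegree hdetne
    rw [hq, Stmt17Aux.totalDegree_mul_eq hf0 hqne] at h1
    omega
  have hqC : q = C (coeff 0 q) := Stmt17Aux.eq_C_of_totalDegree_eq_zero hq0
  set u := coeff 0 q with hu_def
  have hu : u ≠ 0 := fun h0 => hqne (by rw [hqC, h0, map_zero])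
  have hdet : (Matrix.of P).det = C u * f := by rw [hq, hqC, mul_comm]
  have hfh : f.IsHomogeneous f.totalDegree := by
    have h1 : (C u⁻¹ * (Matrix.of P).det).IsHomogeneous f.totalDegree := hdethom.C_mul u⁻¹
    have h2 : C (u⁻¹ : k) * (Matrix.of P).det = f := by
      rw [hdet, ← mul_assoc, ← C_mul, inv_mul_cancel₀ hu, C_1, one_mul]
    rwa [h2] at h1
  have hH : homog f.totalDegree f = rename Fin.succ f := Stmt17Aux.homog_eq_rename hfh
  have hPr : ∀ i j, homog (d i) (P i j) = rename Fin.succ (P i j) :=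
    fun i j => Stmt17Aux.homog_eq_rename (hhom i j)
  -- the determinant of the Saito matrix
  have hdetA : (Matrix.of (saitoRows d P)).det = C u * (X 0 * homog f.totalDegree f) := by
    rw [Matrix.det_succ_column_zero, Fin.sum_univ_succ]
    have hz : ∀ i : Fin n, Matrix.of (saitoRows d P) i.succ 0 = 0 := fun i => by
      simp [saitoRows, Fin.cons_succ, Fin.cons_zero]
    rw [Finset.sum_eq_zero (fun i _ => by rw [hz i]; ring)]
    have hsub : (Matrix.of (saitoRows d P)).submatrix (Fin.succAbove 0) Fin.succ =
        (Matrix.of P).map ⇑(rename (R := k) Fin.succ) := by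
      ext i j
      simp [Matrix.submatrix_apply, Fin.zero_succAbove, saitoRows, Fin.cons_succ,
        Matrix.map_apply, hPr i j]
    have hmapdet : ((Matrix.of P).map ⇑(rename (R := k) Fin.succ)).det
        = rename Fin.succ ((Matrix.of P).det) := by
      rw [AlgHom.map_det (rename Fin.succ) (Matrix.of P)]
      rfl
    rw [hsub, hmapdet, hdet, map_mul, rename_C, hH]
    have h00 : Matrix.of (saitoRows d P) 0 0 = X 0 := by
      simp [saitoRows, Fin.cons_zero]
    rw [h00]
    simp only [Fin.val_zero, pow_zero, one_mul]
    ring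
  have hFhom : ((X 0 : MvPolynomial (Fin (n + 1)) k) * homog f.totalDegree f).IsHomogeneous
      (1 + f.totalDegree) := by
    rw [hH]
    exact (isHomogeneous_X _ _).mul hfh.rename_isHomogeneous
  have hpd0 : pderiv (0 : Fin (n + 1)) (X 0 * homog f.totalDegree f)
      = rename Fin.succ f := by
    rw [hH, pderiv_mul, pderiv_X_self, one_mul, Stmt17Aux.pderiv_zero_rename_succ,
      mul_zero, add_zero]
  have hpds : ∀ j : Fin n, pderiv j.succ (X 0 * homog f.totalDegree f) =
      X 0 * rename Fin.succ (pderiv j f) := by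
    intro j
    rw [hH, pderiv_mul, pderiv_X_of_ne (Fin.succ_ne_zero j).symm,
      pderiv_rename (Fin.succ_injective n), zero_mul, zero_add]
  have hmem0 : (∑ j, X j * pderiv j (X 0 * homog f.totalDegree f))
      ∈ Ideal.span {X 0 * homog f.totalDegree f} := by
    rw [Stmt17Aux.euler_identity hFhom]
    exact Ideal.mem_span_singleton.mpr (dvd_mul_left _ _)
  have hmemS : ∀ i : Fin n, (∑ j, saitoRows d P i.succ j *
      pderiv j (X 0 * homog f.totalDegree f)) ∈ Ideal.span {X 0 * homog f.totalDegree f} := by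
    intro i
    rw [Fin.sum_univ_succ]
    have h00 : saitoRows d P i.succ 0 = 0 := by simp [saitoRows, Fin.cons_succ, Fin.cons_zero]
    rw [h00, zero_mul, zero_add]
    have hterm : ∀ j : Fin n, saitoRows d P i.succ j.succ *
        pderiv j.succ (X 0 * homog f.totalDegree f) =
        X 0 * (rename Fin.succ (P i j) * rename Fin.succ (pderiv j f)) := by
      intro j
      have hs : saitoRows d P i.succ j.succ = homog (d i) (P i j) := by
        simp [saitoRows, Fin.cons_succ]
      rw [hs, hPr, hpds]
      ring
    rw [Finset.sum_congr rfl fun j _ => hterm j, ← Finset.mul_sum]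
    have hren : ∑ j, rename Fin.succ (P i j) * rename Fin.succ (pderiv j f) =
        rename Fin.succ (∑ j, P i j * pderiv j f) := by
      rw [map_sum]
      exact Finset.sum_congr rfl fun j _ => (map_mul _ _ _).symm
    rw [hren]
    obtain ⟨t, ht⟩ := hmemdvd i
    rw [ht, map_mul]
    apply Ideal.mem_span_singleton.mpr
    rw [hH]
    exact ⟨rename Fin.succ t, by ring⟩
  have hHne : (rename (R := k) Fin.succ f) ≠ 0 := by
    intro h0
    exact hf0 (by
      have := MvPolynomial.rename_injective (R := k) Fin.succ (Fin.succ_injective n)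
      apply this
      rw [h0, map_zero])
  have hFne : (X 0 : MvPolynomial (Fin (n + 1)) k) * homog f.totalDegree f ≠ 0 := by
    rw [hH]
    exact mul_ne_zero (MvPolynomial.X_ne_zero 0) hHne
  have hCune : (C u : MvPolynomial (Fin (n + 1)) k) ≠ 0 := fun h0 =>
    hu (by
      have := MvPolynomial.C_injective (Fin (n + 1)) k
      apply this
      rw [h0, map_zero])
  have huniqA : ∀ c₁ c₂ : Fin (n + 1) → MvPolynomial (Fin (n + 1)) k,
      (∀ j, ∑ i, c₁ i * saitoRows d P i j = ∑ i, c₂ i * saitoRows d P i j) → c₁ = c₂ := by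
    intro c₁ c₂ hcc
    by_contra hne
    have hvne : (c₁ - c₂) ≠ 0 := fun h0 => hne (by
      funext j
      have := congrFun h0 j
      simpa [sub_eq_zero] using this)
    have hvM : Matrix.vecMul (c₁ - c₂) (Matrix.of (saitoRows d P)) = 0 := by
      funext j
      simp only [Matrix.vecMul, dotProduct, Pi.sub_apply, sub_mul,
        Finset.sum_sub_distrib, Matrix.of_apply, Pi.zero_apply]
      rw [hcc j, sub_self]
    have hd0 := Matrix.exists_vecMul_eq_zero_iff.mp ⟨c₁ - c₂, hvne, hvM⟩
    rw [hdetA] at hd0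
    exact (mul_ne_zero hCune hFne) hd0
  refine ⟨?_, ?_, u, hu, hdetA⟩
  · intro i
    refine Fin.cases ?_ ?_ i
    · have h0 : ∀ j, saitoRows d P 0 j = X j := fun j => by
        simp [saitoRows, Fin.cons_zero]
      simpa only [h0] using hmem0
    · exact hmemS
  · intro g hg
    obtain ⟨h, hsum⟩ := Ideal.mem_span_singleton.mp hg
    have hsplit : ∑ j, g j * pderiv j (X 0 * homog f.totalDegree f) =
        g 0 * rename Fin.succ f +
          X 0 * ∑ j : Fin n, g j.succ * rename Fin.succ (pderiv j f) := by
      rw [Fin.sum_univ_succ, hpd0]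
      congr 1
      rw [Finset.mul_sum]
      exact Finset.sum_congr rfl fun j _ => by rw [hpds]; ring
    rw [hsplit, hH] at hsum
    -- X 0 divides g 0
    have hXdvd : (X 0 : MvPolynomial (Fin (n + 1)) k) ∣ g 0 := by
      have h1 : (X 0 : MvPolynomial (Fin (n + 1)) k) ∣ g 0 * rename Fin.succ f :=
        ⟨rename Fin.succ f * h - ∑ j : Fin n, g j.succ * rename Fin.succ (pderiv j f), by
          linear_combination hsum⟩
      have h2 : Polynomial.X ∣ finSuccEquiv k n (g 0) * Polynomial.C f := by
        obtain ⟨t, ht⟩ := h1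
        refine ⟨finSuccEquiv k n t, ?_⟩
        have h3 := congrArg (finSuccEquiv k n) ht
        rwa [map_mul, map_mul, Stmt17Aux.finSuccEquiv_rename_succ, finSuccEquiv_X_zero]
          at h3
      have h3 : ¬ (Polynomial.X ∣ (Polynomial.C f :
          Polynomial (MvPolynomial (Fin n) k))) := by
        rintro ⟨t, ht⟩
        apply hf0
        have h4 := congrArg (fun p => Polynomial.coeff p 0) ht
        simpa using h4
      have h4 := (Polynomial.prime_X.dvd_mul.mp h2).resolve_right h3
      obtain ⟨t, ht⟩ := h4
      refine ⟨(finSuccEquiv k n).symm t, ?_⟩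
      apply (finSuccEquiv k n).injective
      rw [map_mul, AlgEquiv.apply_symm_apply, finSuccEquiv_X_zero]
      exact ht
    obtain ⟨b, hb⟩ := hXdvd
    have hsum2 : (∑ j : Fin n, g j.succ * rename Fin.succ (pderiv j f)) =
        rename Fin.succ f * (h - b) := by
      have hcan : (X 0 : MvPolynomial (Fin (n + 1)) k) *
          (b * rename Fin.succ f + ∑ j : Fin n, g j.succ * rename Fin.succ (pderiv j f))
          = X 0 * (rename Fin.succ f * h) := by
        linear_combination hsum - (rename (R := k) Fin.succ f) * hb
      have h5 := mul_left_cancel₀ (MvPolynomial.X_ne_zero (0 : Fin (n + 1))) hcan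
      linear_combination h5
    have heuler : ∑ j : Fin n, X j.succ * rename Fin.succ (pderiv j f) =
        (f.totalDegree : MvPolynomial (Fin (n + 1)) k) * rename Fin.succ f := by
      have h1 : ∑ j : Fin n, X j.succ * rename Fin.succ (pderiv j f)
          = rename Fin.succ (∑ j, X j * pderiv j f) := by
        rw [map_sum]
        exact Finset.sum_congr rfl fun j _ => by rw [map_mul, rename_X]
      rw [h1, Stmt17Aux.euler_identity hfh, map_mul, map_natCast]
    have hsum3 : ∑ j : Fin n, (g j.succ - b * X j.succ) * rename Fin.succ (pderiv j f) =
        rename Fin.succ f *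
          (h - b - b * (f.totalDegree : MvPolynomial (Fin (n + 1)) k)) := by
      have h1 : ∑ j : Fin n, (g j.succ - b * X j.succ) * rename Fin.succ (pderiv j f) =
          (∑ j : Fin n, g j.succ * rename Fin.succ (pderiv j f))
            - b * ∑ j : Fin n, X j.succ * rename Fin.succ (pderiv j f) := by
        rw [Finset.mul_sum, ← Finset.sum_sub_distrib]
        exact Finset.sum_congr rfl fun j _ => by ring
      rw [h1, hsum2, heuler]
      ring
    have h1 : (∑ j : Fin n, finSuccEquiv k n (g j.succ - b * X j.succ) *
        Polynomial.C (pderiv j f)) = Polynomial.C f *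
          finSuccEquiv k n (h - b - b * (f.totalDegree : MvPolynomial (Fin (n + 1)) k)) := by
      have h0 := congrArg (finSuccEquiv k n) hsum3
      rw [map_sum, map_mul, Stmt17Aux.finSuccEquiv_rename_succ] at h0
      rw [← h0]
      exact Finset.sum_congr rfl fun j _ => by
        rw [map_mul, Stmt17Aux.finSuccEquiv_rename_succ]
    have hsum4 : ∀ κ : ℕ, ∑ j : Fin n,
        (finSuccEquiv k n (g j.succ - b * X j.succ)).coeff κ * pderiv j f =
        f * (finSuccEquiv k n
          (h - b - b * (f.totalDegree : MvPolynomial (Fin (n + 1)) k))).coeff κ := by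
      intro κ
      have h2 := congrArg (fun p => Polynomial.coeff p κ) h1
      simpa only [Polynomial.finset_sum_coeff, Polynomial.coeff_mul_C,
        Polynomial.coeff_C_mul] using h2
    have hbas : ∀ κ : ℕ, ∃! c : Fin n → MvPolynomial (Fin n) k,
        ∀ j : Fin n, (finSuccEquiv k n (g j.succ - b * X j.succ)).coeff κ
          = ∑ i, c i * P i j :=
      fun κ => hbasis _ (Ideal.mem_span_singleton.mpr ⟨_, hsum4 κ⟩)
    choose cc hcc hccu using hbas
    set N := Finset.univ.sup
      (fun j : Fin n => (finSuccEquiv k n (g j.succ - b * X j.succ)).natDegree) with hN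
    have hcczero : ∀ κ, N < κ → cc κ = 0 := by
      intro κ hκ
      have h0 : ∀ j : Fin n, (finSuccEquiv k n (g j.succ - b * X j.succ)).coeff κ = 0 := by
        intro j
        apply Polynomial.coeff_eq_zero_of_natDegree_lt
        refine lt_of_le_of_lt (Finset.le_sup (f := fun j : Fin n =>
          (finSuccEquiv k n (g j.succ - b * X j.succ)).natDegree) (Finset.mem_univ j)) ?_
        exact hN ▸ hκ
      exact (hccu κ 0 (fun j => by rw [h0 j]; simp)).symm
    have hchatcoeff : ∀ (i : Fin n) (κ : ℕ),
        (∑ κ' ∈ Finset.range (N + 1), Polynomial.C (cc κ' i) * Polynomial.X ^ κ').coeff κ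
          = cc κ i := by
      intro i κ
      simp only [Polynomial.finset_sum_coeff, Polynomial.coeff_C_mul,
        Polynomial.coeff_X_pow]
      by_cases hκ : κ ≤ N
      · rw [Finset.sum_eq_single κ
          (fun κ' _ hne => by rw [if_neg (fun hh => hne hh.symm), mul_zero])
          (fun habs => absurd (Finset.mem_range.mpr (by omega)) habs)]
        rw [if_pos rfl, mul_one]
      · rw [Finset.sum_eq_zero (fun κ' hκ' => by
          rw [if_neg (by
            have := Finset.mem_range.mp hκ'
            omega), mul_zero])]
        rw [hcczero κ (by omega)]
        rfl
    have hEg : ∀ j : Fin n, finSuccEquiv k n (g j.succ - b * X j.succ) =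
        ∑ i, (∑ κ' ∈ Finset.range (N + 1), Polynomial.C (cc κ' i) * Polynomial.X ^ κ') *
          Polynomial.C (P i j) := by
      intro j
      apply Polynomial.ext
      intro κ
      rw [Polynomial.finset_sum_coeff]
      simp only [Polynomial.coeff_mul_C, hchatcoeff]
      exact hcc κ j
    have hg'eq : ∀ j : Fin n, g j.succ - b * X j.succ =
        ∑ i, (finSuccEquiv k n).symm
          (∑ κ' ∈ Finset.range (N + 1), Polynomial.C (cc κ' i) * Polynomial.X ^ κ') *
            rename Fin.succ (P i j) := by
      intro j
      apply (finSuccEquiv k n).injective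
      rw [hEg j, map_sum]
      exact (Finset.sum_congr rfl fun i _ => by
        rw [map_mul, AlgEquiv.apply_symm_apply, Stmt17Aux.finSuccEquiv_rename_succ]).symm
    set cfin : Fin (n + 1) → MvPolynomial (Fin (n + 1)) k :=
      Fin.cons b (fun i => (finSuccEquiv k n).symm
        (∑ κ' ∈ Finset.range (N + 1), Polynomial.C (cc κ' i) * Polynomial.X ^ κ'))
      with hcfin
    have hcprop : ∀ j, g j = ∑ i, cfin i * saitoRows d P i j := by
      intro j
      rw [Fin.sum_univ_succ, hcfin]
      simp only [Fin.cons_zero, Fin.cons_succ]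
      refine Fin.cases ?_ ?_ j
      · have hA0 : saitoRows d P 0 (0 : Fin (n + 1)) = X 0 := by
          simp [saitoRows, Fin.cons_zero]
        have hAs : ∀ i : Fin n, saitoRows d P i.succ (0 : Fin (n + 1)) = 0 := fun i => by
          simp [saitoRows, Fin.cons_succ, Fin.cons_zero]
        rw [hA0, Finset.sum_eq_zero (fun i _ => by rw [hAs i, mul_zero]), add_zero, hb]
        ring
      · intro j
        have hA0 : saitoRows d P 0 j.succ = X j.succ := by
          simp [saitoRows, Fin.cons_zero]
        have hAs : ∀ i : Fin n, saitoRows d P i.succ j.succ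
            = rename Fin.succ (P i j) := fun i => by
          simp [saitoRows, Fin.cons_succ, hPr i j]
        rw [hA0, Finset.sum_congr rfl (fun i _ => by rw [hAs i])]
        have h6 := hg'eq j
        linear_combination h6
    exact ⟨cfin, hcprop, fun y hy => huniqA y cfin (fun j => by rw [← hy j, ← hcprop j])⟩
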